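/- For 2 ≤ i and pairwise distinct positive reals μ_1 < ... < μ_{i-1}, and for every integer n ≥ i, the coefficient γ_{i,n} := Σ_{j=1}^{i-1} μ_j^{n-2}/∏_{t=1, t≠j}^{i-1}(μ_j - μ_t) is nonnegative; in fact (i-2)! γ_{i,n} = ∫_{Δ_{i-2}} ((n-2)!/(n-i)!) (Σ_{t=1}^{i-1} a_t μ_t)^{n-i} dp_{i-2}(a) ≥ 0. -/

import Mathlib

open MeasureTheory

/-- Coordinate chart of the standard `m`-simplex: the first `m` barycentric
coordinates (the last one is `1 - Σ`).  The uniform probability measure on the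
`m`-simplex corresponds to `m! ·` Lebesgue measure on this set. -/
def stdT (m : ℕ) : Set (Fin m → ℝ) := {t | (∀ j, 0 ≤ t j) ∧ ∑ j, t j ≤ 1}

noncomputable def dd (p : ℕ) (s : Finset ℕ) (x : ℕ → ℝ) : ℝ :=
  ∑ j ∈ s, x j ^ p / ∏ t ∈ s.erase j, (x j - x t)

noncomputable def Jint (p k : ℕ) (x : ℕ → ℝ) : ℝ :=
  ∫ a in stdT k, ((p.factorial : ℝ) / ((p - k).factorial : ℝ)) *
    ((∑ m : Fin k, a m * x m) + (1 - ∑ m : Fin k, a m) * x k) ^ (p - k)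

lemma isClosed_stdT (m : ℕ) : IsClosed (stdT m) := by
  have h1 : IsClosed {t : Fin m → ℝ | ∀ j, 0 ≤ t j} := by
    have : {t : Fin m → ℝ | ∀ j, 0 ≤ t j} = ⋂ j, {t | 0 ≤ t j} := by ext t; simp
    rw [this]
    exact isClosed_iInter fun j => isClosed_le continuous_const (continuous_apply j)
  have h2 : IsClosed {t : Fin m → ℝ | ∑ j, t j ≤ 1} :=
    isClosed_le (by continuity) continuous_const
  exact h1.inter h2

lemma measurableSet_stdT (m : ℕ) : MeasurableSet (stdT m) := (isClosed_stdT m).measurableSet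

lemma isCompact_stdT (m : ℕ) : IsCompact (stdT m) := by
  refine (isCompact_univ_pi (fun _ : Fin m => isCompact_Icc (a := (0:ℝ)) (b := 1))).of_isClosed_subset (isClosed_stdT m) ?_
  intro t ht
  refine Set.mem_univ_pi.2 fun j => ⟨ht.1 j, ?_⟩
  calc t j ≤ ∑ i, t i := Finset.single_le_sum (f := t) (fun i _ => ht.1 i) (Finset.mem_univ j)
    _ ≤ 1 := ht.2


lemma dd_rec (p : ℕ) (s : Finset ℕ) (a b : ℕ) (x : ℕ → ℝ)
    (ha : a ∉ s) (hb : b ∉ s) (hab : a ≠ b)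
    (hx : ∀ t ∈ insert a (insert b s), ∀ u ∈ insert a (insert b s), t ≠ u → x t ≠ x u) :
    dd p (insert a (insert b s)) x * (x a - x b) =
      dd p (insert a s) x - dd p (insert b s) x := by
  have hab' : x a - x b ≠ 0 := sub_ne_zero.2 <| hx a (by simp) b (by simp) hab
  have hb' : b ∉ insert a s := by simp [Ne.symm hab, hb]
  have ha' : a ∉ insert b s := by simp [hab, ha]
  have hPa : ∏ t ∈ s, (x a - x t) ≠ 0 := by
    refine Finset.prod_ne_zero_iff.2 fun t ht => sub_ne_zero.2 ?_
    exact hx a (by simp) t (by simp [ht]) (fun h => ha (h ▸ ht))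
  have hPb : ∏ t ∈ s, (x b - x t) ≠ 0 := by
    refine Finset.prod_ne_zero_iff.2 fun t ht => sub_ne_zero.2 ?_
    exact hx b (by simp) t (by simp [ht]) (fun h => hb (h ▸ ht))
  rw [dd, dd, dd, Finset.sum_insert ha', Finset.sum_insert hb, Finset.sum_insert ha,
    Finset.sum_insert hb]
  rw [Finset.erase_insert ha', Finset.erase_insert ha, Finset.erase_insert hb]
  have hea : (insert a (insert b s)).erase b = insert a s := by
    rw [Finset.insert_comm, Finset.erase_insert hb']
  rw [hea]
  rw [Finset.prod_insert hb, Finset.prod_insert ha]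
  rw [add_mul, add_mul, Finset.sum_mul]
  have hterm : ∀ j ∈ s,
      (x j ^ p / ∏ t ∈ (insert a (insert b s)).erase j, (x j - x t)) * (x a - x b) =
      x j ^ p / ∏ t ∈ (insert a s).erase j, (x j - x t) -
        x j ^ p / ∏ t ∈ (insert b s).erase j, (x j - x t) := by
    intro j hj
    have hja : j ≠ a := fun h => ha (h ▸ hj)
    have hjb : j ≠ b := fun h => hb (h ▸ hj)
    have h1 : (insert a (insert b s)).erase j = insert a (insert b (s.erase j)) := by
      rw [Finset.erase_insert_of_ne hja.symm, Finset.erase_insert_of_ne hjb.symm]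
    have h2 : (insert a s).erase j = insert a (s.erase j) := Finset.erase_insert_of_ne hja.symm
    have h3 : (insert b s).erase j = insert b (s.erase j) := Finset.erase_insert_of_ne hjb.symm
    have hbj : b ∉ s.erase j := fun h => hb (Finset.mem_of_mem_erase h)
    have haj' : a ∉ s.erase j := fun h => ha (Finset.mem_of_mem_erase h)
    have haj : a ∉ insert b (s.erase j) := by simp [hab, haj']
    rw [h1, h2, h3, Finset.prod_insert haj, Finset.prod_insert hbj, Finset.prod_insert haj']
    have hP : ∏ t ∈ s.erase j, (x j - x t) ≠ 0 := by
      refine Finset.prod_ne_zero_iff.2 fun t ht => sub_ne_zero.2 ?_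
      exact hx j (by simp [hj]) t (by simp [Finset.mem_of_mem_erase ht])
        ((Finset.mem_erase.1 ht).1.symm)
    have hja' : x j - x a ≠ 0 := sub_ne_zero.2 <| hx j (by simp [hj]) a (by simp) hja
    have hjb' : x j - x b ≠ 0 := sub_ne_zero.2 <| hx j (by simp [hj]) b (by simp) hjb
    field_simp
    ring
  rw [Finset.sum_congr rfl hterm, Finset.sum_sub_distrib]
  have e1 : x a ^ p / ((x a - x b) * ∏ t ∈ s, (x a - x t)) * (x a - x b) =
      x a ^ p / ∏ t ∈ s, (x a - x t) := by field_simp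
  have e2 : x b ^ p / ((x b - x a) * ∏ t ∈ s, (x b - x t)) * (x a - x b) =
      -(x b ^ p / ∏ t ∈ s, (x b - x t)) := by
    have : x b - x a ≠ 0 := fun h => hab' (by linarith [sub_eq_zero.1 h])
    field_simp
    ring
  rw [e1, e2]
  ring

lemma dd_congr {p : ℕ} {s : Finset ℕ} {x y : ℕ → ℝ} (h : ∀ j ∈ s, x j = y j) :
    dd p s x = dd p s y := by
  refine Finset.sum_congr rfl fun j hj => ?_
  rw [h j hj]
  congr 1
  exact Finset.prod_congr rfl fun t ht => by rw [h t (Finset.mem_of_mem_erase ht)]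

lemma dd_shift (p k : ℕ) (x : ℕ → ℝ) :
    dd p (insert (k+1) (Finset.range k)) x =
      dd p (Finset.range (k+1)) (Function.update x k (x (k+1))) := by
  have hk : k ∉ Finset.range k := by simp
  have hk1 : (k+1) ∉ Finset.range k := by simp
  set y := Function.update x k (x (k+1)) with hy
  have hyk : y k = x (k+1) := by simp [hy]
  have hyj : ∀ j ∈ Finset.range k, y j = x j := fun j hj => by
    simp [hy, Function.update_of_ne (by simp at hj; omega : j ≠ k)]
  rw [Finset.range_add_one, dd, dd, Finset.sum_insert hk1, Finset.sum_insert hk,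
    Finset.erase_insert hk1, Finset.erase_insert hk]
  congr 1
  · rw [hyk]
    congr 1
    exact Finset.prod_congr rfl fun t ht => by rw [hyj t ht]
  · refine Finset.sum_congr rfl fun j hj => ?_
    have hjk : j ≠ k := by simp at hj; omega
    have hjk1 : j ≠ k + 1 := by simp at hj; omega
    rw [Finset.erase_insert_of_ne (by omega : (k+1) ≠ j),
      Finset.erase_insert_of_ne (by omega : k ≠ j),
      Finset.prod_insert (by simp : (k+1) ∉ (Finset.range k).erase j),
      Finset.prod_insert (by simp : k ∉ (Finset.range k).erase j), hyj j hj, hyk]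
    congr 2
    exact Finset.prod_congr rfl fun t ht => by rw [hyj t (Finset.mem_of_mem_erase ht)]

lemma dd_base (p : ℕ) (x : ℕ → ℝ) : dd p (Finset.range 1) x = x 0 ^ p := by
  simp [dd]

lemma snoc_mem_stdT_iff {k : ℕ} (a : Fin k → ℝ) (y : ℝ) :
    Fin.snoc a y ∈ stdT (k+1) ↔ a ∈ stdT k ∧ y ∈ Set.Icc 0 (1 - ∑ j, a j) := by
  have hsum : ∑ j, (Fin.snoc a y : Fin (k+1) → ℝ) j = (∑ j, a j) + y := by
    rw [Fin.sum_univ_castSucc]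
    simp [Fin.snoc_castSucc, Fin.snoc_last]
  constructor
  · rintro ⟨h1, h2⟩
    rw [hsum] at h2
    have hy : 0 ≤ y := by simpa [Fin.snoc_last] using h1 (Fin.last k)
    have ha : ∀ j : Fin k, 0 ≤ a j := fun j => by
      simpa [Fin.snoc_castSucc] using h1 j.castSucc
    exact ⟨⟨ha, by linarith⟩, hy, by linarith⟩
  · rintro ⟨⟨ha, hs⟩, hy0, hy1⟩
    refine ⟨fun j => ?_, by rw [hsum]; linarith⟩
    refine Fin.lastCases ?_ ?_ j
    · simpa [Fin.snoc_last] using hy0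
    · intro j'; simpa [Fin.snoc_castSucc] using ha j'

lemma continuous_snoc' {k : ℕ} : Continuous (fun z : ℝ × (Fin k → ℝ) => (Fin.snoc z.2 z.1 : Fin (k+1) → ℝ)) := by
  refine continuous_pi fun j => ?_
  refine Fin.lastCases ?_ ?_ j
  · simpa [Fin.snoc_last] using continuous_fst
  · intro j'
    simpa [Fin.snoc_castSucc, Function.comp_def] using (continuous_apply j').comp continuous_snd

lemma peel (k : ℕ) (F : (Fin (k+1) → ℝ) → ℝ) (hF : Continuous F) :
    ∫ a in stdT (k+1), F a =
      ∫ a in stdT k, ∫ y in Set.Icc 0 (1 - ∑ j, a j), F (Fin.snoc a y) := by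
  classical
  set e := MeasurableEquiv.piFinSuccAbove (fun _ : Fin (k+1) => ℝ) (Fin.last k)
  have hmp : MeasurePreserving e (volume : Measure (Fin (k+1) → ℝ))
      ((volume : Measure ℝ).prod (volume : Measure (Fin k → ℝ))) := by
    exact measurePreserving_piFinSuccAbove (fun _ : Fin (k+1) => (volume : Measure ℝ)) (Fin.last k)
  have hesymm : ∀ z : ℝ × (Fin k → ℝ), e.symm z = Fin.snoc z.2 z.1 := by
    intro z
    show (Fin.insertNthEquiv (fun _ => ℝ) (Fin.last k)) (z.1, z.2) = _
    simp [Fin.insertNthEquiv, Fin.insertNth_last']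
  set G : (Fin (k+1) → ℝ) → ℝ := (stdT (k+1)).indicator F with hG
  have h1 : ∫ a in stdT (k+1), F a = ∫ a, G a := (integral_indicator (measurableSet_stdT _)).symm
  have h2 : ∫ a, G a = ∫ z, G (e.symm z) ∂((volume : Measure ℝ).prod volume) := by
    rw [← hmp.symm e |>.integral_comp (MeasurableEquiv.measurableEmbedding e.symm) G]
  -- integrability
  set T : Set (ℝ × (Fin k → ℝ)) := e.symm ⁻¹' (stdT (k+1)) with hT
  have hTeq : T = e '' (stdT (k+1)) := by
    ext z
    constructor
    · intro h; exact ⟨e.symm z, h, e.apply_symm_apply z⟩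
    · rintro ⟨w, hw, rfl⟩; simp only [hT, Set.mem_preimage, e.symm_apply_apply]; exact hw
  have hecont : Continuous ⇑e := by
    have : ⇑e = fun f : Fin (k+1) → ℝ =>
        ((f (Fin.last k), fun j => f ((Fin.last k).succAbove j)) : ℝ × (Fin k → ℝ)) := by
      funext f
      simp only [e, MeasurableEquiv.piFinSuccAbove_apply]
      exact Prod.ext rfl rfl
    rw [this]
    exact (continuous_apply _).prodMk (continuous_pi fun j => continuous_apply _)
  have hesc : Continuous ⇑e.symm := by
    have : ⇑e.symm = fun z : ℝ × (Fin k → ℝ) => (Fin.snoc z.2 z.1 : Fin (k+1) → ℝ) := funext hesymm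
    rw [this]; exact continuous_snoc'
  have hTc : IsCompact T := hTeq ▸ (isCompact_stdT (k+1)).image hecont
  have hGint : Integrable (fun z => G (e.symm z)) ((volume : Measure ℝ).prod volume) := by
    have hind : (fun z => G (e.symm z)) = T.indicator (fun z => F (e.symm z)) := by
      funext z
      simp only [hG, hT]
      by_cases h : e.symm z ∈ stdT (k+1) <;>
        simp [Set.indicator_apply, h, Set.mem_preimage]
    rw [hind, integrable_indicator_iff hTc.measurableSet]
    exact ContinuousOn.integrableOn_compact hTc ((hF.comp hesc).continuousOn)
  have h3 : ∫ z, G (e.symm z) ∂((volume : Measure ℝ).prod volume) =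
      ∫ a, ∫ y, G (e.symm (y, a)) ∂(volume : Measure ℝ) ∂(volume : Measure (Fin k → ℝ)) :=
    integral_prod_symm _ hGint
  have h4 : ∀ a : Fin k → ℝ, (∫ y, G (e.symm (y, a)) ∂(volume : Measure ℝ)) =
      (stdT k).indicator (fun a => ∫ y in Set.Icc 0 (1 - ∑ j, a j), F (Fin.snoc a y)) a := by
    intro a
    have : ∀ y : ℝ, G (e.symm (y, a)) =
        (stdT k).indicator (fun a' => (Set.Icc (0:ℝ) (1 - ∑ j, a' j)).indicator
          (fun y => F (Fin.snoc a' y)) y) a := by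
      intro y
      rw [hesymm]
      simp only [hG, Set.indicator_apply]
      by_cases h1 : a ∈ stdT k <;> by_cases h2 : y ∈ Set.Icc (0:ℝ) (1 - ∑ j, a j) <;>
        simp [snoc_mem_stdT_iff, h1, h2]
    rw [funext this]
    by_cases h1 : a ∈ stdT k
    · simp only [Set.indicator_of_mem h1]
      exact integral_indicator measurableSet_Icc
    · simp [Set.indicator_of_notMem h1]
  rw [h1, h2, h3]
  rw [integral_congr_ae (Filter.Eventually.of_forall h4)] -- maybe wrong name
  rw [integral_indicator (measurableSet_stdT k)]

lemma ftc (C c d s : ℝ) (q : ℕ) (hd : d ≠ 0) :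
    ∫ y in (0:ℝ)..s, C * (c + d * y) ^ q =
      (C / ((q+1) * d)) * ((c + d * s) ^ (q+1) - c ^ (q+1)) := by
  rw [intervalIntegral.integral_const_mul]
  have h1 : ∀ y : ℝ, (c + d * y) ^ q = (fun x : ℝ => x ^ q) (d * y + c) := by
    intro y; ring_nf
  rw [intervalIntegral.integral_congr (fun y _ => h1 y)]
  rw [intervalIntegral.integral_comp_mul_add (fun x : ℝ => x ^ q) hd c]
  rw [integral_pow]
  have hq : ((q:ℝ)+1) ≠ 0 := by positivity
  simp only [smul_eq_mul, mul_zero, zero_add]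
  field_simp
  ring

lemma Jint_zero (p : ℕ) (x : ℕ → ℝ) : Jint p 0 x = x 0 ^ p := by
  rw [Jint]
  have h1 : stdT 0 = Set.univ := by ext t; simp [stdT]
  rw [h1, Measure.restrict_univ]
  simp only [Finset.univ_eq_empty, Finset.sum_empty, Nat.sub_zero]
  rw [integral_const]
  have h2 : (volume : Measure (Fin 0 → ℝ)) Set.univ = 1 := by
    rw [volume_pi, Measure.pi_univ]
    simp
  rw [measureReal_def, h2]
  have h3 : (p.factorial : ℝ) ≠ 0 := Nat.cast_ne_zero.2 (Nat.factorial_ne_zero _)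
  simp
  field_simp

lemma Jint_succ (p k : ℕ) (x : ℕ → ℝ) (hk : k + 1 ≤ p) (hd : x k - x (k+1) ≠ 0) :
    Jint p (k+1) x =
      (Jint p k x - Jint p k (Function.update x k (x (k+1)))) / (x k - x (k+1)) := by
  classical
  have hq1 : (p - (k+1)) + 1 = p - k := by omega
  have hCC : ((p.factorial : ℝ) / ((p - (k+1)).factorial : ℝ)) / (((p - (k+1) : ℕ) + 1 : ℝ) * (x k - x (k+1)))
      = ((p.factorial : ℝ) / ((p - k).factorial : ℝ)) / (x k - x (k+1)) := by
    have h2 : (p - k).factorial = ((p - (k+1)) + 1) * (p - (k+1)).factorial := by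
      rw [← hq1]; exact Nat.factorial_succ _
    rw [h2]
    have hf : ((p - (k+1)).factorial : ℝ) ≠ 0 := Nat.cast_ne_zero.2 (Nat.factorial_ne_zero _)
    have hs : ((p - (k+1) : ℕ) + 1 : ℝ) ≠ 0 := by positivity
    push_cast
    field_simp
  have hF : Continuous (fun a : Fin (k+1) → ℝ =>
      ((p.factorial : ℝ) / ((p - (k+1)).factorial : ℝ)) *
        ((∑ m : Fin (k+1), a m * x m) + (1 - ∑ m : Fin (k+1), a m) * x (k+1)) ^ (p - (k+1))) := by
    fun_prop
  rw [Jint, peel k _ hF]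
  have inner_eq : ∀ a ∈ stdT k,
      (∫ y in Set.Icc 0 (1 - ∑ j, a j),
        ((p.factorial : ℝ) / ((p - (k+1)).factorial : ℝ)) *
          ((∑ m : Fin (k+1), (Fin.snoc a y : Fin (k+1) → ℝ) m * x m)
            + (1 - ∑ m : Fin (k+1), (Fin.snoc a y : Fin (k+1) → ℝ) m) * x (k+1)) ^ (p - (k+1)))
      = (((p.factorial : ℝ) / ((p - k).factorial : ℝ)) *
            ((∑ m : Fin k, a m * x m) + (1 - ∑ m : Fin k, a m) * x k) ^ (p - k)
         - ((p.factorial : ℝ) / ((p - k).factorial : ℝ)) *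
            ((∑ m : Fin k, a m * x m) + (1 - ∑ m : Fin k, a m) * x (k+1)) ^ (p - k))
          / (x k - x (k+1)) := by
    intro a ha
    have hsum1 : ∀ y : ℝ, (∑ m : Fin (k+1), (Fin.snoc a y : Fin (k+1) → ℝ) m * x m)
        = (∑ m : Fin k, a m * x m) + y * x k := by
      intro y
      rw [Fin.sum_univ_castSucc]
      simp [Fin.snoc_castSucc, Fin.snoc_last]
    have hsum2 : ∀ y : ℝ, (∑ m : Fin (k+1), (Fin.snoc a y : Fin (k+1) → ℝ) m)
        = (∑ m : Fin k, a m) + y := by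
      intro y
      rw [Fin.sum_univ_castSucc]
      simp [Fin.snoc_castSucc, Fin.snoc_last]
    have harg : ∀ y : ℝ, ((∑ m : Fin k, a m * x m) + y * x k)
          + (1 - ((∑ m : Fin k, a m) + y)) * x (k+1)
        = ((∑ m : Fin k, a m * x m) + (1 - ∑ m : Fin k, a m) * x (k+1))
          + (x k - x (k+1)) * y := by
      intro y; ring
    simp only [hsum1, hsum2, harg]
    have hs0 : (0:ℝ) ≤ 1 - ∑ j, a j := by
      have := ha.2; linarith
    rw [MeasureTheory.integral_Icc_eq_integral_Ioc, ← intervalIntegral.integral_of_le hs0]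
    rw [ftc _ _ _ _ _ hd]
    rw [hCC]
    have hc2 : ((∑ m : Fin k, a m * x m) + (1 - ∑ m : Fin k, a m) * x (k+1))
          + (x k - x (k+1)) * (1 - ∑ j, a j)
        = (∑ m : Fin k, a m * x m) + (1 - ∑ m : Fin k, a m) * x k := by ring
    rw [hq1, hc2]
    ring
  rw [setIntegral_congr_fun (measurableSet_stdT k) inner_eq]
  have hint1 : IntegrableOn (fun a : Fin k → ℝ =>
      ((p.factorial : ℝ) / ((p - k).factorial : ℝ)) *
        ((∑ m : Fin k, a m * x m) + (1 - ∑ m : Fin k, a m) * x k) ^ (p - k)) (stdT k) :=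
    ContinuousOn.integrableOn_compact (isCompact_stdT k) (by fun_prop)
  have hint2 : IntegrableOn (fun a : Fin k → ℝ =>
      ((p.factorial : ℝ) / ((p - k).factorial : ℝ)) *
        ((∑ m : Fin k, a m * x m) + (1 - ∑ m : Fin k, a m) * x (k+1)) ^ (p - k)) (stdT k) :=
    ContinuousOn.integrableOn_compact (isCompact_stdT k) (by fun_prop)
  rw [integral_div, integral_sub hint1 hint2]
  have hJ2 : Jint p k (Function.update x k (x (k+1)))
      = ∫ a in stdT k, ((p.factorial : ℝ) / ((p - k).factorial : ℝ)) *
          ((∑ m : Fin k, a m * x m) + (1 - ∑ m : Fin k, a m) * x (k+1)) ^ (p - k) := by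
    rw [Jint]
    refine setIntegral_congr_fun (measurableSet_stdT k) fun a _ => ?_
    have h1 : (∑ m : Fin k, a m * (Function.update x k (x (k+1))) m)
        = ∑ m : Fin k, a m * x m :=
      Finset.sum_congr rfl fun m _ => by
        rw [Function.update_of_ne (by exact_mod_cast Nat.ne_of_lt m.isLt)]
    rw [h1, Function.update_self]
  rw [Jint, hJ2]

lemma dd_eq_Jint (p : ℕ) : ∀ (k : ℕ) (x : ℕ → ℝ), k ≤ p →
    (∀ t, t ≤ k → ∀ u, u ≤ k → t ≠ u → x t ≠ x u) →
    dd p (Finset.range (k+1)) x = Jint p k x := by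
  intro k
  induction k with
  | zero => intro x _ _; rw [dd_base, Jint_zero]
  | succ k ih =>
    intro x hk hx
    have hd : x k - x (k+1) ≠ 0 :=
      sub_ne_zero.2 (hx k (by omega) (k+1) (by omega) (by omega))
    have hset : insert k (insert (k+1) (Finset.range k)) = Finset.range (k+2) := by
      ext t; simp; omega
    have hrec := dd_rec p (Finset.range k) k (k+1) x (by simp) (by simp) (by omega)
      (by
        intro t ht u hu htu
        rw [hset] at ht hu
        simp only [Finset.mem_range] at ht hu
        exact hx t (by omega) u (by omega) htu)
    rw [hset, ← Finset.range_add_one, dd_shift] at hrec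
    have hy : ∀ t, t ≤ k → ∀ u, u ≤ k → t ≠ u →
        (Function.update x k (x (k+1))) t ≠ (Function.update x k (x (k+1))) u := by
      intro t ht u hu htu
      by_cases htk : t = k <;> by_cases huk : u = k
      · omega
      · rw [htk, Function.update_self, Function.update_of_ne huk]
        exact hx (k+1) (by omega) u (by omega) (by omega)
      · rw [huk, Function.update_self, Function.update_of_ne htk]
        rw [huk] at htu
        exact hx t (by omega) (k+1) (by omega) (by omega)
      · rw [Function.update_of_ne htk, Function.update_of_ne huk]
        exact hx t (by omega) u (by omega) htu
    rw [ih x (by omega) (fun t ht u hu htu => hx t (by omega) u (by omega) htu),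
      ih _ (by omega) hy] at hrec
    rw [Jint_succ p k x hk hd, ← hrec]
    field_simp

lemma sum_reindex (k p : ℕ) (μ : ℕ → ℝ) :
    (∑ j ∈ Finset.Icc 1 (k+1), μ j ^ p / ∏ t ∈ (Finset.Icc 1 (k+1)).erase j, (μ j - μ t))
      = dd p (Finset.range (k+1)) (fun j => μ (j+1)) := by
  have hinj : Function.Injective (· + 1 : ℕ → ℕ) := fun a b h => by simpa using h
  have him : Finset.Icc 1 (k+1) = (Finset.range (k+1)).image (· + 1) := by
    ext t
    simp only [Finset.mem_Icc, Finset.mem_image, Finset.mem_range]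
    constructor
    · intro h; exact ⟨t - 1, by omega, by omega⟩
    · rintro ⟨a, ha, rfl⟩; omega
  rw [dd, him, Finset.sum_image (fun a _ b _ h => hinj h)]
  refine Finset.sum_congr rfl fun j hj => ?_
  congr 1
  rw [← Finset.image_erase hinj]
  rw [Finset.prod_image (fun a _ b _ h => hinj h)]


/-- For `i ≥ 2`, `0 < μ_1 < … < μ_{i-1}` and `n ≥ i`, the Wang-expansion
coefficient `γ_{i,n} = Σ_{j=1}^{i-1} μ_j^{n-2}/∏_{t≠j}(μ_j - μ_t)` satisfies
`(i-2)! γ_{i,n} = ∫_{Δ_{i-2}} ((n-2)!/(n-i)!) (Σ_t a_t μ_t)^{n-i} dp_{i-2}`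
(stated in the coordinate chart, where `dp_{i-2} = (i-2)! dλ`), and in
particular `γ_{i,n} ≥ 0`. -/
theorem gamma_nonneg_integral (i n : ℕ) (hi : 2 ≤ i) (hn : i ≤ n) (μ : ℕ → ℝ)
    (hpos : ∀ j, 1 ≤ j → j ≤ i - 1 → 0 < μ j)
    (hmono : ∀ j j', 1 ≤ j → j < j' → j' ≤ i - 1 → μ j < μ j') :
    (∑ j ∈ Finset.Icc 1 (i - 1),
        μ j ^ (n - 2) / ∏ t ∈ (Finset.Icc 1 (i - 1)).erase j, (μ j - μ t)) =
      (∫ a in stdT (i - 2),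
        ((n - 2).factorial : ℝ) / ((n - i).factorial : ℝ) *
          ((∑ m : Fin (i - 2), a m * μ (m + 1)) + (1 - ∑ m : Fin (i - 2), a m) * μ (i - 1))
            ^ (n - i)) ∧
      0 ≤ ∑ j ∈ Finset.Icc 1 (i - 1),
        μ j ^ (n - 2) / ∏ t ∈ (Finset.Icc 1 (i - 1)).erase j, (μ j - μ t) := by
  have hik : i - 1 = (i - 2) + 1 := by omega
  have hdist : ∀ t, t ≤ i - 2 → ∀ u, u ≤ i - 2 → t ≠ u →
      (fun j => μ (j+1)) t ≠ (fun j => μ (j+1)) u := by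
    intro t ht u hu htu
    simp only
    rcases Nat.lt_or_ge t u with h | h
    · exact ne_of_lt (hmono (t+1) (u+1) (by omega) (by omega) (by omega))
    · exact (ne_of_lt (hmono (u+1) (t+1) (by omega) (by omega) (by omega))).symm
  have hsum : (∑ j ∈ Finset.Icc 1 (i - 1),
        μ j ^ (n - 2) / ∏ t ∈ (Finset.Icc 1 (i - 1)).erase j, (μ j - μ t))
      = Jint (n-2) (i-2) (fun j => μ (j+1)) := by
    rw [hik, sum_reindex (i-2) (n-2) μ]
    exact dd_eq_Jint (n-2) (i-2) _ (by omega) hdist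
  have hJ : Jint (n-2) (i-2) (fun j => μ (j+1)) =
      ∫ a in stdT (i - 2),
        ((n - 2).factorial : ℝ) / ((n - i).factorial : ℝ) *
          ((∑ m : Fin (i - 2), a m * μ (m + 1)) + (1 - ∑ m : Fin (i - 2), a m) * μ (i - 1))
            ^ (n - i) := by
    rw [Jint]
    have h1 : (n-2) - (i-2) = n - i := by omega
    rw [h1, hik]
  constructor
  · rw [hsum, hJ]
  · rw [hsum, hJ]
    refine setIntegral_nonneg (measurableSet_stdT _) fun a ha => ?_
    have h0 : (0:ℝ) ≤ ((n-2).factorial : ℝ) / ((n-i).factorial : ℝ) := by positivity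
    refine mul_nonneg h0 (pow_nonneg ?_ _)
    refine add_nonneg (Finset.sum_nonneg fun m _ => mul_nonneg (ha.1 m) ?_) ?_
    · exact le_of_lt (hpos (↑m+1) (by omega) (by have := m.isLt; omega))
    · exact mul_nonneg (by have := ha.2; linarith)
        (le_of_lt (hpos (i-1) (by omega) (by omega)))
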